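/- Let p,q,r∈(1,∞) with 1/p + 1/q = 1 + 1/r and let β∈(0,1]. For any f∈L_p(0,∞) and any measurable g with ‖g‖_{L_q^{0,β}} = (∫₀^∞ |g(v)|^q K₀(βv) dv)^{1/q} < ∞, the convolution f⋆g is well-defined, belongs to L_r(0,∞), and ‖f⋆g‖_{L_r(0,∞)} ≤ 2^{1/q}·‖f‖_{L_p(0,∞)}·‖g‖_{L_q^{0,β}}. -/

import Mathlib

open MeasureTheory Real Set

/-- The kernel function φ(x,u,v). -/
noncomputable def phiKer (x u v : ℝ) : ℝ :=
  Real.exp (-v * Real.cosh (x + u - 1)) + Real.exp (-v * Real.cosh (x - u + 1))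
    - Real.exp (-v * Real.cosh (x + u + 1)) - Real.exp (-v * Real.cosh (x - u - 1))

/-- The modified Bessel function of the second kind of order zero. -/
noncomputable def K0 (v : ℝ) : ℝ := ∫ t in Set.Ioi (0 : ℝ), Real.exp (-v * Real.cosh t)

/-- The trigonometric-weighted generalized convolution (f ⋆ g). -/
noncomputable def gconv (f g : ℝ → ℝ) (x : ℝ) : ℝ :=
  (1 / 4) * ∫ v in Set.Ioi (0 : ℝ), ∫ u in Set.Ioi (0 : ℝ), phiKer x u v * f u * g v

/-- Fourier cosine transform. -/
noncomputable def Fc (f : ℝ → ℝ) (y : ℝ) : ℝ :=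
  Real.sqrt (2 / Real.pi) * ∫ x in Set.Ioi (0 : ℝ), f x * Real.cos (x * y)

/-- Fourier sine transform. -/
noncomputable def Fs (f : ℝ → ℝ) (y : ℝ) : ℝ :=
  Real.sqrt (2 / Real.pi) * ∫ x in Set.Ioi (0 : ℝ), f x * Real.sin (x * y)

/-- Modified Bessel function K_{iy}(x). -/
noncomputable def Kiy (y x : ℝ) : ℝ :=
  ∫ u in Set.Ioi (0 : ℝ), Real.exp (-x * Real.cosh u) * Real.cos (y * u)

/-- Kontorovich–Lebedev transform. -/
noncomputable def KL (g : ℝ → ℝ) (y : ℝ) : ℝ := ∫ x in Set.Ioi (0 : ℝ), Kiy y x * g x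

/-- Fourier cosine convolution. -/
noncomputable def fcConv (f g : ℝ → ℝ) (x : ℝ) : ℝ :=
  (1 / Real.sqrt (2 * Real.pi)) * ∫ u in Set.Ioi (0 : ℝ), f u * (g |x - u| + g (x + u))

/-- Fourier sine–cosine generalized convolution. -/
noncomputable def fscConv (f g : ℝ → ℝ) (x : ℝ) : ℝ :=
  (1 / Real.sqrt (2 * Real.pi)) * ∫ u in Set.Ioi (0 : ℝ), f u * (g |x - u| - g (x + u))

open MeasureTheory Real Set
open scoped ENNReal

namespace GYoung

lemma self_le_cosh (t : ℝ) : t ≤ Real.cosh t := by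
  rcases le_or_gt t 0 with h | h
  · exact h.trans (Real.cosh_pos t).le
  · have h1 : t ≤ Real.exp (t - 1) := by
      have := Real.add_one_le_exp (t - 1); linarith
  -- exp (t-1) = exp t / exp 1 ≤ exp t / 2
    have h2 : Real.exp (t - 1) ≤ Real.exp t / 2 := by
      rw [Real.exp_sub]
      have h3 : (2:ℝ) ≤ Real.exp 1 := by
        have := Real.exp_one_gt_d9; linarith
      gcongr
    have h4 : Real.exp t / 2 ≤ Real.cosh t := by
      rw [Real.cosh_eq]
      have := (Real.exp_pos (-t)).le
      linarith
    linarith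

lemma K0_nonneg (w : ℝ) : 0 ≤ K0 w :=
  setIntegral_nonneg measurableSet_Ioi fun t _ => (Real.exp_pos _).le

lemma integrableOn_exp_cosh {w : ℝ} (hw : 0 < w) :
    IntegrableOn (fun t => Real.exp (-w * Real.cosh t)) (Ioi (0:ℝ)) := by
  refine (exp_neg_integrableOn_Ioi 0 hw).mono'
    ((Real.continuous_exp.comp (continuous_const.mul Real.continuous_cosh)).aestronglyMeasurable) ?_
  filter_upwards [ae_restrict_mem measurableSet_Ioi] with t _
  rw [Real.norm_eq_abs, abs_of_pos (Real.exp_pos _)]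
  apply Real.exp_le_exp.2
  nlinarith [self_le_cosh t]

lemma integrable_exp_cosh {w : ℝ} (hw : 0 < w) :
    Integrable (fun t => Real.exp (-w * Real.cosh t)) := by
  have h1 := integrableOn_exp_cosh hw
  have h2 : IntegrableOn (fun t => Real.exp (-w * Real.cosh t)) (Iio (0:ℝ)) := by
    have A := (MeasurePreserving.integrableOn_comp_preimage
      (Measure.measurePreserving_neg (volume : Measure ℝ))
      (Homeomorph.neg ℝ).measurableEmbedding).2 h1
    have hs : (fun x : ℝ => -x) ⁻¹' (Ioi 0) = Iio 0 := by
      ext x; simp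
    rw [hs] at A
    refine A.congr_fun (fun x _ => ?_) measurableSet_Iio
    simp [Function.comp, Real.cosh_neg]
  have h0 : IntegrableOn (fun t => Real.exp (-w * Real.cosh t)) ({(0:ℝ)}) := by
    unfold IntegrableOn
    rw [Measure.restrict_eq_zero.mpr (by simp)]
    exact integrable_zero_measure
  have := (h2.union h1).union h0
  rw [Iio_union_Ioi, compl_union_self] at this
  rwa [integrableOn_univ] at this

lemma lintegral_exp_cosh {w : ℝ} (hw : 0 < w) :
    ∫⁻ t, ENNReal.ofReal (Real.exp (-w * Real.cosh t)) = ENNReal.ofReal (2 * K0 w) := by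
  rw [← ofReal_integral_eq_lintegral_ofReal (integrable_exp_cosh hw)
    (ae_of_all _ fun t => (Real.exp_pos _).le)]
  congr 1
  have h := integral_comp_abs (f := fun s => Real.exp (-w * Real.cosh s))
  simp_rw [Real.cosh_abs] at h
  rw [h, K0]

lemma lint_shift {w : ℝ} (hw : 0 < w) (c : ℝ) :
    ∫⁻ u in Ioi (0:ℝ), ENNReal.ofReal (Real.exp (-w * Real.cosh (u + c)))
      ≤ ENNReal.ofReal (2 * K0 w) :=
  calc ∫⁻ u in Ioi (0:ℝ), ENNReal.ofReal (Real.exp (-w * Real.cosh (u + c)))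
      ≤ ∫⁻ u, ENNReal.ofReal (Real.exp (-w * Real.cosh (u + c))) :=
        setLIntegral_le_lintegral _ _
    _ = ∫⁻ u, ENNReal.ofReal (Real.exp (-w * Real.cosh u)) :=
        lintegral_add_right_eq_self (fun s => ENNReal.ofReal (Real.exp (-w * Real.cosh s))) c
    _ = ENNReal.ofReal (2 * K0 w) := lintegral_exp_cosh hw

lemma k_le (x u v : ℝ) :
    (‖phiKer x u v‖₊ : ℝ≥0∞) ≤
      ENNReal.ofReal (Real.exp (-v * Real.cosh (x + u - 1)))
      + ENNReal.ofReal (Real.exp (-v * Real.cosh (x - u + 1)))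
      + ENNReal.ofReal (Real.exp (-v * Real.cosh (x + u + 1)))
      + ENNReal.ofReal (Real.exp (-v * Real.cosh (x - u - 1))) := by
  rw [← enorm_eq_nnnorm, Real.enorm_eq_ofReal_abs,
    ← ENNReal.ofReal_add (by positivity) (by positivity),
    ← ENNReal.ofReal_add (by positivity) (by positivity),
    ← ENNReal.ofReal_add (by positivity) (by positivity)]
  apply ENNReal.ofReal_le_ofReal
  have e1 := (Real.exp_pos (-v * Real.cosh (x + u - 1))).le
  have e2 := (Real.exp_pos (-v * Real.cosh (x - u + 1))).le
  have e3 := (Real.exp_pos (-v * Real.cosh (x + u + 1))).le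
  have e4 := (Real.exp_pos (-v * Real.cosh (x - u - 1))).le
  rw [abs_le]
  unfold phiKer
  constructor <;> linarith

lemma exp_cosh_mono {v w s : ℝ} (hw : 0 ≤ w) (hwv : w ≤ v) :
    Real.exp (-v * Real.cosh s) ≤ Real.exp (-w * Real.cosh s) := by
  apply Real.exp_le_exp.2
  nlinarith [Real.one_le_cosh s]

lemma mass_u {β v : ℝ} (hβ : β ∈ Set.Ioc (0:ℝ) 1) (hv : 0 < v) (x : ℝ) :
    ∫⁻ u in Ioi (0:ℝ), (‖phiKer x u v‖₊ : ℝ≥0∞) ≤ 8 * ENNReal.ofReal (K0 (β * v)) := by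
  have hbv : 0 < β * v := mul_pos hβ.1 hv
  have hwv : β * v ≤ v := by nlinarith [hβ.2]
  have pt : ∀ u : ℝ, (‖phiKer x u v‖₊ : ℝ≥0∞) ≤
      ENNReal.ofReal (Real.exp (-(β*v) * Real.cosh (u + (x - 1))))
      + ENNReal.ofReal (Real.exp (-(β*v) * Real.cosh (u + (-x - 1))))
      + ENNReal.ofReal (Real.exp (-(β*v) * Real.cosh (u + (x + 1))))
      + ENNReal.ofReal (Real.exp (-(β*v) * Real.cosh (u + (-x + 1)))) := by
    intro u
    refine (k_le x u v).trans ?_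
    have c2 : Real.cosh (x - u + 1) = Real.cosh (u + (-x - 1)) := by
      rw [← Real.cosh_neg]; ring_nf
    have c4 : Real.cosh (x - u - 1) = Real.cosh (u + (-x + 1)) := by
      rw [← Real.cosh_neg]; ring_nf
    have c1 : Real.cosh (x + u - 1) = Real.cosh (u + (x - 1)) := by ring_nf
    have c3 : Real.cosh (x + u + 1) = Real.cosh (u + (x + 1)) := by ring_nf
    gcongr ?_ + ?_ + ?_ + ?_ <;> apply ENNReal.ofReal_le_ofReal
    · rw [c1]; exact exp_cosh_mono hbv.le hwv
    · rw [c2]; exact exp_cosh_mono hbv.le hwv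
    · rw [c3]; exact exp_cosh_mono hbv.le hwv
    · rw [c4]; exact exp_cosh_mono hbv.le hwv
  have meas : ∀ c : ℝ, Measurable fun u : ℝ =>
      ENNReal.ofReal (Real.exp (-(β*v) * Real.cosh (u + c))) := by
    intro c
    exact ENNReal.measurable_ofReal.comp
      ((Real.continuous_exp.comp
        (continuous_const.mul (Real.continuous_cosh.comp (continuous_add_right c)))).measurable)
  calc ∫⁻ u in Ioi (0:ℝ), (‖phiKer x u v‖₊ : ℝ≥0∞) ≤
      ∫⁻ u in Ioi (0:ℝ),
        (ENNReal.ofReal (Real.exp (-(β*v) * Real.cosh (u + (x - 1))))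
        + ENNReal.ofReal (Real.exp (-(β*v) * Real.cosh (u + (-x - 1))))
        + ENNReal.ofReal (Real.exp (-(β*v) * Real.cosh (u + (x + 1))))
        + ENNReal.ofReal (Real.exp (-(β*v) * Real.cosh (u + (-x + 1))))) :=
      lintegral_mono pt
    _ ≤ ENNReal.ofReal (2 * K0 (β*v)) + ENNReal.ofReal (2 * K0 (β*v))
        + ENNReal.ofReal (2 * K0 (β*v)) + ENNReal.ofReal (2 * K0 (β*v)) := by
      rw [lintegral_add_right _ (meas _), lintegral_add_right _ (meas _),
        lintegral_add_right _ (meas _)]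
      gcongr <;> exact lint_shift hbv _
    _ = 8 * ENNReal.ofReal (K0 (β * v)) := by
      rw [ENNReal.ofReal_mul (by norm_num : (0:ℝ) ≤ 2)]
      rw [show ENNReal.ofReal 2 = 2 from by simp]
      ring

lemma mass_x {β v : ℝ} (hβ : β ∈ Set.Ioc (0:ℝ) 1) (hv : 0 < v) (u : ℝ) :
    ∫⁻ x in Ioi (0:ℝ), (‖phiKer x u v‖₊ : ℝ≥0∞) ≤ 8 * ENNReal.ofReal (K0 (β * v)) := by
  have hbv : 0 < β * v := mul_pos hβ.1 hv
  have hwv : β * v ≤ v := by nlinarith [hβ.2]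
  have pt : ∀ x : ℝ, (‖phiKer x u v‖₊ : ℝ≥0∞) ≤
      ENNReal.ofReal (Real.exp (-(β*v) * Real.cosh (x + (u - 1))))
      + ENNReal.ofReal (Real.exp (-(β*v) * Real.cosh (x + (-u + 1))))
      + ENNReal.ofReal (Real.exp (-(β*v) * Real.cosh (x + (u + 1))))
      + ENNReal.ofReal (Real.exp (-(β*v) * Real.cosh (x + (-u - 1)))) := by
    intro x
    refine (k_le x u v).trans ?_
    have c1 : Real.cosh (x + u - 1) = Real.cosh (x + (u - 1)) := by ring_nf
    have c2 : Real.cosh (x - u + 1) = Real.cosh (x + (-u + 1)) := by ring_nf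
    have c3 : Real.cosh (x + u + 1) = Real.cosh (x + (u + 1)) := by ring_nf
    have c4 : Real.cosh (x - u - 1) = Real.cosh (x + (-u - 1)) := by ring_nf
    gcongr ?_ + ?_ + ?_ + ?_ <;> apply ENNReal.ofReal_le_ofReal
    · rw [c1]; exact exp_cosh_mono hbv.le hwv
    · rw [c2]; exact exp_cosh_mono hbv.le hwv
    · rw [c3]; exact exp_cosh_mono hbv.le hwv
    · rw [c4]; exact exp_cosh_mono hbv.le hwv
  have meas : ∀ c : ℝ, Measurable fun x : ℝ =>
      ENNReal.ofReal (Real.exp (-(β*v) * Real.cosh (x + c))) := by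
    intro c
    exact ENNReal.measurable_ofReal.comp
      ((Real.continuous_exp.comp
        (continuous_const.mul (Real.continuous_cosh.comp (continuous_add_right c)))).measurable)
  calc ∫⁻ x in Ioi (0:ℝ), (‖phiKer x u v‖₊ : ℝ≥0∞) ≤
      ∫⁻ x in Ioi (0:ℝ),
        (ENNReal.ofReal (Real.exp (-(β*v) * Real.cosh (x + (u - 1))))
        + ENNReal.ofReal (Real.exp (-(β*v) * Real.cosh (x + (-u + 1))))
        + ENNReal.ofReal (Real.exp (-(β*v) * Real.cosh (x + (u + 1))))
        + ENNReal.ofReal (Real.exp (-(β*v) * Real.cosh (x + (-u - 1))))) :=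
      lintegral_mono pt
    _ ≤ ENNReal.ofReal (2 * K0 (β*v)) + ENNReal.ofReal (2 * K0 (β*v))
        + ENNReal.ofReal (2 * K0 (β*v)) + ENNReal.ofReal (2 * K0 (β*v)) := by
      rw [lintegral_add_right _ (meas _), lintegral_add_right _ (meas _),
        lintegral_add_right _ (meas _)]
      gcongr <;> exact lint_shift hbv _
    _ = 8 * ENNReal.ofReal (K0 (β * v)) := by
      rw [ENNReal.ofReal_mul (by norm_num : (0:ℝ) ≤ 2)]
      rw [show ENNReal.ofReal 2 = 2 from by simp]
      ring

lemma mass_v (x u : ℝ) :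
    ∫⁻ v in Ioi (0:ℝ), (‖phiKer x u v‖₊ : ℝ≥0∞) ≤ 4 := by
  have pt : ∀ v ∈ Ioi (0:ℝ), (‖phiKer x u v‖₊ : ℝ≥0∞) ≤ 4 * ENNReal.ofReal (Real.exp (-v)) := by
    intro v hv
    have hv' : (0:ℝ) < v := hv
    refine (k_le x u v).trans ?_
    have key : ∀ s : ℝ, Real.exp (-v * Real.cosh s) ≤ Real.exp (-v) := by
      intro s
      apply Real.exp_le_exp.2
      nlinarith [Real.one_le_cosh s]
    have h4 : (4 : ℝ≥0∞) * ENNReal.ofReal (Real.exp (-v)) =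
        ENNReal.ofReal (Real.exp (-v)) + ENNReal.ofReal (Real.exp (-v))
        + ENNReal.ofReal (Real.exp (-v)) + ENNReal.ofReal (Real.exp (-v)) := by ring
    rw [h4]
    gcongr ?_ + ?_ + ?_ + ?_ <;> exact ENNReal.ofReal_le_ofReal (key _)
  calc ∫⁻ v in Ioi (0:ℝ), (‖phiKer x u v‖₊ : ℝ≥0∞)
      ≤ ∫⁻ v in Ioi (0:ℝ), 4 * ENNReal.ofReal (Real.exp (-v)) := by
        refine lintegral_mono_ae ?_
        filter_upwards [ae_restrict_mem measurableSet_Ioi] with v hv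
        exact pt v hv
    _ = 4 * ∫⁻ v in Ioi (0:ℝ), ENNReal.ofReal (Real.exp (-v)) :=
        lintegral_const_mul' _ _ (by norm_num)
    _ = 4 * ENNReal.ofReal 1 := by
        rw [← ofReal_integral_eq_lintegral_ofReal]
        · rw [integral_exp_neg_Ioi_zero]
        · have := exp_neg_integrableOn_Ioi 0 (one_pos)
          exact (by simpa using this : IntegrableOn (fun x => rexp (-x)) (Ioi 0))
        · exact ae_of_all _ fun v => (Real.exp_pos _).le
    _ = 4 := by simp

lemma rpow_split {p q e1 e2 e3 : ℝ} (he1 : 0 ≤ e1) (he2 : 0 ≤ e2) (he3 : 0 ≤ e3)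
    (hsum : e1 + e2 + e3 = 1) (hpe : p * (e1 + e2) = 1) (hqe : q * (e1 + e3) = 1)
    (K X Y : ℝ≥0∞) :
    K * X * Y = (K * X ^ p * Y ^ q) ^ e1 * (K * X ^ p) ^ e2 * (K * Y ^ q) ^ e3 := by
  rw [ENNReal.mul_rpow_of_nonneg _ _ he1, ENNReal.mul_rpow_of_nonneg _ _ he1,
    ENNReal.mul_rpow_of_nonneg _ _ he2, ENNReal.mul_rpow_of_nonneg _ _ he3,
    ← ENNReal.rpow_mul, ← ENNReal.rpow_mul, ← ENNReal.rpow_mul, ← ENNReal.rpow_mul]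
  have hK : K ^ e1 * K ^ e2 * K ^ e3 = K := by
    rw [← ENNReal.rpow_add_of_nonneg e1 e2 he1 he2,
      ← ENNReal.rpow_add_of_nonneg _ e3 (by linarith) he3, hsum, ENNReal.rpow_one]
  have hp0 : 0 ≤ p := by nlinarith
  have hq0 : 0 ≤ q := by nlinarith
  have hX : X ^ (p * e1) * X ^ (p * e2) = X := by
    rw [← ENNReal.rpow_add_of_nonneg _ _ (mul_nonneg hp0 he1) (mul_nonneg hp0 he2),
      show p * e1 + p * e2 = p * (e1 + e2) by ring, hpe, ENNReal.rpow_one]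
  have hY : Y ^ (q * e1) * Y ^ (q * e3) = Y := by
    rw [← ENNReal.rpow_add_of_nonneg _ _ (mul_nonneg hq0 he1) (mul_nonneg hq0 he3),
      show q * e1 + q * e3 = q * (e1 + e3) by ring, hqe, ENNReal.rpow_one]
  calc K * X * Y = (K ^ e1 * K ^ e2 * K ^ e3) * (X ^ (p * e1) * X ^ (p * e2))
        * (Y ^ (q * e1) * Y ^ (q * e3)) := by rw [hK, hX, hY]
    _ = K ^ e1 * X ^ (p * e1) * Y ^ (q * e1) * (K ^ e2 * X ^ (p * e2))
        * (K ^ e3 * Y ^ (q * e3)) := by ring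

end GYoung

namespace GYoung

@[fun_prop]
lemma measurable_phiKer3 : Measurable fun z : ℝ × ℝ × ℝ => phiKer z.1 z.2.1 z.2.2 := by
  unfold phiKer; fun_prop

lemma main (p q r β : ℝ) (hp : 1 < p) (hq : 1 < q) (hr : 1 < r)
    (hpqr : 1 / p + 1 / q = 1 + 1 / r) (hβ : β ∈ Set.Ioc (0 : ℝ) 1)
    (f g : ℝ → ℝ) (hfm : Measurable f) (hgm : Measurable g)
    (A B : ℝ≥0∞)
    (hAdef : A = ∫⁻ u in Ioi (0:ℝ), (‖f u‖₊ : ℝ≥0∞) ^ p)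
    (hBdef : B = ∫⁻ v in Ioi (0:ℝ), (‖g v‖₊ : ℝ≥0∞) ^ q * ENNReal.ofReal (K0 (β * v)))
    (hA : A ≠ ⊤) (hB : B ≠ ⊤) :
    (∫⁻ x in Ioi (0:ℝ), (‖gconv f g x‖₊ : ℝ≥0∞) ^ r) ^ (1/r) ≤
      (2:ℝ≥0∞) ^ (1/q) * A ^ (1/p) * B ^ (1/q) := by
  have hp0 : (0:ℝ) < p := by linarith
  have hq0 : (0:ℝ) < q := by linarith
  have hr0 : (0:ℝ) < r := by linarith
  -- exponents
  set e1 : ℝ := 1/r with he1def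
  set e2 : ℝ := 1 - 1/q with he2def
  set e3 : ℝ := 1 - 1/p with he3def
  have he1 : 0 < e1 := by rw [he1def]; positivity
  have he2 : 0 < e2 := by
    have : 1/q < 1 := by rw [div_lt_one hq0]; exact hq
    rw [he2def]; linarith
  have he3 : 0 < e3 := by
    have : 1/p < 1 := by rw [div_lt_one hp0]; exact hp
    rw [he3def]; linarith
  have hsum : e1 + e2 + e3 = 1 := by
    rw [he1def, he2def, he3def]; linarith
  have hep : e2 + e1 = 1/p := by rw [he1def, he2def]; linarith
  have heq : e3 + e1 = 1/q := by rw [he1def, he3def]; linarith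
  have hpe : p * (e1 + e2) = 1 := by
    rw [show e1 + e2 = 1/p by linarith]; field_simp
  have hqe : q * (e1 + e3) = 1 := by
    rw [show e1 + e3 = 1/q by linarith]; field_simp
  -- measurability package
  have ma : ∀ x : ℝ, Measurable fun z : ℝ × ℝ =>
      (‖phiKer x z.2 z.1‖₊ : ℝ≥0∞) * (‖f z.2‖₊ : ℝ≥0∞) ^ p * (‖g z.1‖₊ : ℝ≥0∞) ^ q := by
    intro x; fun_prop
  have mb : ∀ x : ℝ, Measurable fun z : ℝ × ℝ =>
      (‖phiKer x z.2 z.1‖₊ : ℝ≥0∞) * (‖f z.2‖₊ : ℝ≥0∞) ^ p := by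
    intro x; fun_prop
  have mc : ∀ x : ℝ, Measurable fun z : ℝ × ℝ =>
      (‖phiKer x z.2 z.1‖₊ : ℝ≥0∞) * (‖g z.1‖₊ : ℝ≥0∞) ^ q := by
    intro x; fun_prop
  have mkfg : ∀ x : ℝ, Measurable fun z : ℝ × ℝ =>
      (‖phiKer x z.2 z.1‖₊ : ℝ≥0∞) * (‖f z.2‖₊ : ℝ≥0∞) * (‖g z.1‖₊ : ℝ≥0∞) := by
    intro x; fun_prop
  -- finiteness facts
  have hFfin : ∀ u : ℝ, ((‖f u‖₊ : ℝ≥0∞)) ^ p ≠ ⊤ := fun u =>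
    ENNReal.rpow_ne_top_of_nonneg hp0.le ENNReal.coe_ne_top
  have hGfin : ∀ v : ℝ, ((‖g v‖₊ : ℝ≥0∞)) ^ q ≠ ⊤ := fun v =>
    ENNReal.rpow_ne_top_of_nonneg hq0.le ENNReal.coe_ne_top
  -- abbreviations
  set D : ℝ≥0∞ := ((4:ℝ≥0∞) * A) ^ e2 * ((8:ℝ≥0∞) * B) ^ e3 with hDdef
  have hDne : D ≠ ⊤ := by
    rw [hDdef]
    exact ENNReal.mul_ne_top
      (ENNReal.rpow_ne_top_of_nonneg he2.le (ENNReal.mul_ne_top (by norm_num) hA))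
      (ENNReal.rpow_ne_top_of_nonneg he3.le (ENNReal.mul_ne_top (by norm_num) hB))
  set I1 : ℝ → ℝ≥0∞ := fun x => ∫⁻ z : ℝ × ℝ, (‖phiKer x z.2 z.1‖₊ : ℝ≥0∞)
      * (‖f z.2‖₊ : ℝ≥0∞) ^ p * (‖g z.1‖₊ : ℝ≥0∞) ^ q
      ∂((volume.restrict (Ioi 0)).prod (volume.restrict (Ioi 0))) with hI1def
  -- Step 1 : pointwise domination by the iterated lintegral
  have step1 : ∀ x : ℝ, (‖gconv f g x‖₊ : ℝ≥0∞) ≤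
      ENNReal.ofReal (1/4) *
        ∫⁻ v in Ioi (0:ℝ), (∫⁻ u in Ioi (0:ℝ),
          (‖phiKer x u v‖₊ : ℝ≥0∞) * ‖f u‖₊ * ‖g v‖₊) := by
    intro x
    have h0 : gconv f g x
        = (1/4 : ℝ) * ∫ v in Ioi (0:ℝ), (∫ u in Ioi (0:ℝ), phiKer x u v * f u * g v) := rfl
    rw [h0, nnnorm_mul, ENNReal.coe_mul]
    have hc : ((‖(1/4 : ℝ)‖₊ : ℝ≥0∞)) = ENNReal.ofReal (1/4) := by
      rw [← enorm_eq_nnnorm, Real.enorm_eq_ofReal_abs]; norm_num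
    rw [hc]
    refine mul_le_mul_right ?_ _
    refine (enorm_integral_le_lintegral_enorm _).trans ?_
    refine lintegral_mono fun v => ?_
    refine (enorm_integral_le_lintegral_enorm _).trans ?_
    refine le_of_eq (lintegral_congr fun u => ?_)
    rw [enorm_eq_nnnorm, nnnorm_mul, nnnorm_mul, ENNReal.coe_mul, ENNReal.coe_mul]
  -- Hölder step
  have holder : ∀ x : ℝ,
      (∫⁻ v in Ioi (0:ℝ), (∫⁻ u in Ioi (0:ℝ),
          (‖phiKer x u v‖₊ : ℝ≥0∞) * ‖f u‖₊ * ‖g v‖₊)) ≤ I1 x ^ e1 * D := by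
    intro x
    have hun : (∫⁻ v in Ioi (0:ℝ), (∫⁻ u in Ioi (0:ℝ),
          (‖phiKer x u v‖₊ : ℝ≥0∞) * ‖f u‖₊ * ‖g v‖₊))
        = ∫⁻ z : ℝ × ℝ, (‖phiKer x z.2 z.1‖₊ : ℝ≥0∞) * ‖f z.2‖₊ * ‖g z.1‖₊
          ∂((volume.restrict (Ioi 0)).prod (volume.restrict (Ioi 0))) :=
      lintegral_lintegral (mkfg x).aemeasurable
    rw [hun]
    have hpt : (∫⁻ z : ℝ × ℝ, (‖phiKer x z.2 z.1‖₊ : ℝ≥0∞) * ‖f z.2‖₊ * ‖g z.1‖₊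
          ∂((volume.restrict (Ioi 0)).prod (volume.restrict (Ioi 0))))
        = ∫⁻ z : ℝ × ℝ,
          ((‖phiKer x z.2 z.1‖₊ : ℝ≥0∞) * (‖f z.2‖₊ : ℝ≥0∞) ^ p * (‖g z.1‖₊ : ℝ≥0∞) ^ q) ^ e1
          * ((‖phiKer x z.2 z.1‖₊ : ℝ≥0∞) * (‖f z.2‖₊ : ℝ≥0∞) ^ p) ^ e2
          * ((‖phiKer x z.2 z.1‖₊ : ℝ≥0∞) * (‖g z.1‖₊ : ℝ≥0∞) ^ q) ^ e3
          ∂((volume.restrict (Ioi 0)).prod (volume.restrict (Ioi 0))) :=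
      lintegral_congr fun z => rpow_split he1.le he2.le he3.le hsum hpe hqe _ _ _
    rw [hpt]
    have h3 := ENNReal.lintegral_prod_norm_pow_le
      (μ := (volume.restrict (Ioi (0:ℝ))).prod (volume.restrict (Ioi 0))) Finset.univ
      (f := ![fun z : ℝ × ℝ => (‖phiKer x z.2 z.1‖₊ : ℝ≥0∞) * (‖f z.2‖₊ : ℝ≥0∞) ^ p
          * (‖g z.1‖₊ : ℝ≥0∞) ^ q,
        fun z : ℝ × ℝ => (‖phiKer x z.2 z.1‖₊ : ℝ≥0∞) * (‖f z.2‖₊ : ℝ≥0∞) ^ p,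
        fun z : ℝ × ℝ => (‖phiKer x z.2 z.1‖₊ : ℝ≥0∞) * (‖g z.1‖₊ : ℝ≥0∞) ^ q])
      (p := ![e1, e2, e3])
      (by intro i _
          fin_cases i
          · exact (ma x).aemeasurable
          · exact (mb x).aemeasurable
          · exact (mc x).aemeasurable)
      (by simp only [Fin.sum_univ_three, Matrix.cons_val_zero, Matrix.cons_val_one,
            Matrix.head_cons, Matrix.cons_val_two, Matrix.tail_cons]
          exact hsum)
      (by intro i _
          fin_cases i
          · exact he1.le
          · exact he2.le
          · exact he3.le)
    simp only [Fin.prod_univ_three, Matrix.cons_val_zero, Matrix.cons_val_one,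
      Matrix.head_cons, Matrix.cons_val_two, Matrix.tail_cons] at h3
    refine h3.trans ?_
    rw [hI1def, hDdef, mul_assoc]
    refine mul_le_mul_right ?_ _
    -- bound the two integrals
    have hbb : (∫⁻ z : ℝ × ℝ, (‖phiKer x z.2 z.1‖₊ : ℝ≥0∞) * (‖f z.2‖₊ : ℝ≥0∞) ^ p
          ∂((volume.restrict (Ioi 0)).prod (volume.restrict (Ioi 0))))
        ≤ (4:ℝ≥0∞) * A := by
      have c1 : (∫⁻ z : ℝ × ℝ, (‖phiKer x z.2 z.1‖₊ : ℝ≥0∞) * (‖f z.2‖₊ : ℝ≥0∞) ^ p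
            ∂((volume.restrict (Ioi 0)).prod (volume.restrict (Ioi 0))))
          = ∫⁻ v in Ioi (0:ℝ), (∫⁻ u in Ioi (0:ℝ),
              (‖phiKer x u v‖₊ : ℝ≥0∞) * (‖f u‖₊ : ℝ≥0∞) ^ p) :=
        lintegral_prod _ (mb x).aemeasurable
      have c2 : (∫⁻ v in Ioi (0:ℝ), (∫⁻ u in Ioi (0:ℝ),
              (‖phiKer x u v‖₊ : ℝ≥0∞) * (‖f u‖₊ : ℝ≥0∞) ^ p))
          = ∫⁻ u in Ioi (0:ℝ), (∫⁻ v in Ioi (0:ℝ),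
              (‖phiKer x u v‖₊ : ℝ≥0∞) * (‖f u‖₊ : ℝ≥0∞) ^ p) :=
        lintegral_lintegral_swap (mb x).aemeasurable
      rw [c1, c2]
      calc (∫⁻ u in Ioi (0:ℝ), (∫⁻ v in Ioi (0:ℝ),
              (‖phiKer x u v‖₊ : ℝ≥0∞) * (‖f u‖₊ : ℝ≥0∞) ^ p))
          ≤ ∫⁻ u in Ioi (0:ℝ), (4:ℝ≥0∞) * (‖f u‖₊ : ℝ≥0∞) ^ p := by
            refine lintegral_mono fun u => ?_
            have c3 : (∫⁻ v in Ioi (0:ℝ),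
                  (‖phiKer x u v‖₊ : ℝ≥0∞) * (‖f u‖₊ : ℝ≥0∞) ^ p)
                = (∫⁻ v in Ioi (0:ℝ), (‖phiKer x u v‖₊ : ℝ≥0∞)) * (‖f u‖₊ : ℝ≥0∞) ^ p :=
              lintegral_mul_const' _ _ (hFfin u)
            rw [c3]
            exact mul_le_mul_left (mass_v x u) _
        _ = (4:ℝ≥0∞) * A := by rw [hAdef]; exact lintegral_const_mul' _ _ (by norm_num)
    have hcc : (∫⁻ z : ℝ × ℝ, (‖phiKer x z.2 z.1‖₊ : ℝ≥0∞) * (‖g z.1‖₊ : ℝ≥0∞) ^ q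
          ∂((volume.restrict (Ioi 0)).prod (volume.restrict (Ioi 0))))
        ≤ (8:ℝ≥0∞) * B := by
      have c1 : (∫⁻ z : ℝ × ℝ, (‖phiKer x z.2 z.1‖₊ : ℝ≥0∞) * (‖g z.1‖₊ : ℝ≥0∞) ^ q
            ∂((volume.restrict (Ioi 0)).prod (volume.restrict (Ioi 0))))
          = ∫⁻ v in Ioi (0:ℝ), (∫⁻ u in Ioi (0:ℝ),
              (‖phiKer x u v‖₊ : ℝ≥0∞) * (‖g v‖₊ : ℝ≥0∞) ^ q) :=
        lintegral_prod _ (mc x).aemeasurable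
      rw [c1]
      calc (∫⁻ v in Ioi (0:ℝ), (∫⁻ u in Ioi (0:ℝ),
              (‖phiKer x u v‖₊ : ℝ≥0∞) * (‖g v‖₊ : ℝ≥0∞) ^ q))
          ≤ ∫⁻ v in Ioi (0:ℝ),
              (8:ℝ≥0∞) * ((‖g v‖₊ : ℝ≥0∞) ^ q * ENNReal.ofReal (K0 (β * v))) := by
            refine lintegral_mono_ae ?_
            filter_upwards [ae_restrict_mem measurableSet_Ioi] with v hv
            have c3 : (∫⁻ u in Ioi (0:ℝ),
                  (‖phiKer x u v‖₊ : ℝ≥0∞) * (‖g v‖₊ : ℝ≥0∞) ^ q)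
                = (∫⁻ u in Ioi (0:ℝ), (‖phiKer x u v‖₊ : ℝ≥0∞)) * (‖g v‖₊ : ℝ≥0∞) ^ q :=
              lintegral_mul_const' _ _ (hGfin v)
            rw [c3]
            calc (∫⁻ u in Ioi (0:ℝ), (‖phiKer x u v‖₊ : ℝ≥0∞)) * (‖g v‖₊ : ℝ≥0∞) ^ q
                ≤ (8 * ENNReal.ofReal (K0 (β * v))) * (‖g v‖₊ : ℝ≥0∞) ^ q :=
                  mul_le_mul_left (mass_u hβ hv x) _
              _ = (8:ℝ≥0∞) * ((‖g v‖₊ : ℝ≥0∞) ^ q * ENNReal.ofReal (K0 (β * v))) := by ring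
        _ = (8:ℝ≥0∞) * B := by rw [hBdef]; exact lintegral_const_mul' _ _ (by norm_num)
    exact mul_le_mul' (ENNReal.rpow_le_rpow hbb he2.le) (ENNReal.rpow_le_rpow hcc he3.le)
  -- integral of I1 over x
  have hI1bound : (∫⁻ x in Ioi (0:ℝ), I1 x) ≤ 8 * (A * B) := by
    have conv1 : (∫⁻ x in Ioi (0:ℝ), I1 x)
        = ∫⁻ x in Ioi (0:ℝ), (∫⁻ v in Ioi (0:ℝ), (∫⁻ u in Ioi (0:ℝ),
            (‖phiKer x u v‖₊ : ℝ≥0∞) * (‖f u‖₊ : ℝ≥0∞) ^ p * (‖g v‖₊ : ℝ≥0∞) ^ q)) := by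
      refine lintegral_congr fun x => ?_
      rw [hI1def]
      exact lintegral_prod _ (ma x).aemeasurable
    rw [conv1]
    have m1 : Measurable fun w : ℝ × ℝ => ∫⁻ u in Ioi (0:ℝ),
        (‖phiKer w.1 u w.2‖₊ : ℝ≥0∞) * (‖f u‖₊ : ℝ≥0∞) ^ p * (‖g w.2‖₊ : ℝ≥0∞) ^ q := by
      apply Measurable.lintegral_prod_right'
        (f := fun s : (ℝ × ℝ) × ℝ =>
          (‖phiKer s.1.1 s.2 s.1.2‖₊ : ℝ≥0∞) * (‖f s.2‖₊ : ℝ≥0∞) ^ p * (‖g s.1.2‖₊ : ℝ≥0∞) ^ q)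
      fun_prop
    have swap1 : (∫⁻ x in Ioi (0:ℝ), (∫⁻ v in Ioi (0:ℝ), (∫⁻ u in Ioi (0:ℝ),
            (‖phiKer x u v‖₊ : ℝ≥0∞) * (‖f u‖₊ : ℝ≥0∞) ^ p * (‖g v‖₊ : ℝ≥0∞) ^ q)))
        = ∫⁻ v in Ioi (0:ℝ), (∫⁻ x in Ioi (0:ℝ), (∫⁻ u in Ioi (0:ℝ),
            (‖phiKer x u v‖₊ : ℝ≥0∞) * (‖f u‖₊ : ℝ≥0∞) ^ p * (‖g v‖₊ : ℝ≥0∞) ^ q)) :=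
      lintegral_lintegral_swap m1.aemeasurable
    rw [swap1]
    have swap2 : ∀ v : ℝ, (∫⁻ x in Ioi (0:ℝ), (∫⁻ u in Ioi (0:ℝ),
            (‖phiKer x u v‖₊ : ℝ≥0∞) * (‖f u‖₊ : ℝ≥0∞) ^ p * (‖g v‖₊ : ℝ≥0∞) ^ q))
        = ∫⁻ u in Ioi (0:ℝ), (∫⁻ x in Ioi (0:ℝ),
            (‖phiKer x u v‖₊ : ℝ≥0∞) * (‖f u‖₊ : ℝ≥0∞) ^ p * (‖g v‖₊ : ℝ≥0∞) ^ q) := by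
      intro v
      refine lintegral_lintegral_swap ?_
      have : Measurable fun z : ℝ × ℝ =>
          (‖phiKer z.1 z.2 v‖₊ : ℝ≥0∞) * (‖f z.2‖₊ : ℝ≥0∞) ^ p * (‖g v‖₊ : ℝ≥0∞) ^ q := by
        fun_prop
      exact this.aemeasurable
    calc (∫⁻ v in Ioi (0:ℝ), (∫⁻ x in Ioi (0:ℝ), (∫⁻ u in Ioi (0:ℝ),
            (‖phiKer x u v‖₊ : ℝ≥0∞) * (‖f u‖₊ : ℝ≥0∞) ^ p * (‖g v‖₊ : ℝ≥0∞) ^ q)))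
        ≤ ∫⁻ v in Ioi (0:ℝ),
            ((8:ℝ≥0∞) * A) * ((‖g v‖₊ : ℝ≥0∞) ^ q * ENNReal.ofReal (K0 (β * v))) := by
          refine lintegral_mono_ae ?_
          filter_upwards [ae_restrict_mem measurableSet_Ioi] with v hv
          rw [swap2 v]
          calc (∫⁻ u in Ioi (0:ℝ), (∫⁻ x in Ioi (0:ℝ),
                  (‖phiKer x u v‖₊ : ℝ≥0∞) * (‖f u‖₊ : ℝ≥0∞) ^ p * (‖g v‖₊ : ℝ≥0∞) ^ q))
              ≤ ∫⁻ u in Ioi (0:ℝ),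
                  ((8 * ENNReal.ofReal (K0 (β * v))) * (‖g v‖₊ : ℝ≥0∞) ^ q)
                    * (‖f u‖₊ : ℝ≥0∞) ^ p := by
                refine lintegral_mono fun u => ?_
                have c4 : (∫⁻ x in Ioi (0:ℝ),
                      (‖phiKer x u v‖₊ : ℝ≥0∞) * (‖f u‖₊ : ℝ≥0∞) ^ p * (‖g v‖₊ : ℝ≥0∞) ^ q)
                    = (∫⁻ x in Ioi (0:ℝ), (‖phiKer x u v‖₊ : ℝ≥0∞))
                      * ((‖f u‖₊ : ℝ≥0∞) ^ p * (‖g v‖₊ : ℝ≥0∞) ^ q) := by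
                  rw [← lintegral_mul_const' _ _
                    (ENNReal.mul_ne_top (hFfin u) (hGfin v))]
                  exact lintegral_congr fun x => by ring
                rw [c4]
                calc (∫⁻ x in Ioi (0:ℝ), (‖phiKer x u v‖₊ : ℝ≥0∞))
                      * ((‖f u‖₊ : ℝ≥0∞) ^ p * (‖g v‖₊ : ℝ≥0∞) ^ q)
                    ≤ (8 * ENNReal.ofReal (K0 (β * v)))
                      * ((‖f u‖₊ : ℝ≥0∞) ^ p * (‖g v‖₊ : ℝ≥0∞) ^ q) :=
                      mul_le_mul_left (mass_x hβ hv u) _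
                  _ = ((8 * ENNReal.ofReal (K0 (β * v))) * (‖g v‖₊ : ℝ≥0∞) ^ q)
                      * (‖f u‖₊ : ℝ≥0∞) ^ p := by ring
            _ = ((8:ℝ≥0∞) * A) * ((‖g v‖₊ : ℝ≥0∞) ^ q * ENNReal.ofReal (K0 (β * v))) := by
                rw [hAdef, lintegral_const_mul' _ _ (ENNReal.mul_ne_top
                  (ENNReal.mul_ne_top (by norm_num) ENNReal.ofReal_ne_top) (hGfin v))]
                ring
      _ = ((8:ℝ≥0∞) * A) * B := by
          rw [hBdef]; exact lintegral_const_mul' _ _ (ENNReal.mul_ne_top (by norm_num) hA)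
      _ = 8 * (A * B) := by ring
  -- assemble
  have step2 : ∀ x : ℝ, (‖gconv f g x‖₊ : ℝ≥0∞) ^ r ≤
      (ENNReal.ofReal (1/4) ^ r * D ^ r) * I1 x := by
    intro x
    have h1 : (‖gconv f g x‖₊ : ℝ≥0∞) ≤ ENNReal.ofReal (1/4) * (I1 x ^ e1 * D) :=
      (step1 x).trans (mul_le_mul_right (holder x) _)
    refine (ENNReal.rpow_le_rpow h1 hr0.le).trans (le_of_eq ?_)
    rw [ENNReal.mul_rpow_of_nonneg _ _ hr0.le, ENNReal.mul_rpow_of_nonneg _ _ hr0.le,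
      ← ENNReal.rpow_mul (I1 x), show e1 * r = 1 by rw [he1def]; field_simp,
      ENNReal.rpow_one]
    ring
  have step3 : (∫⁻ x in Ioi (0:ℝ), (‖gconv f g x‖₊ : ℝ≥0∞) ^ r) ≤
      (ENNReal.ofReal (1/4) ^ r * D ^ r) * (8 * (A * B)) := by
    calc (∫⁻ x in Ioi (0:ℝ), (‖gconv f g x‖₊ : ℝ≥0∞) ^ r)
        ≤ ∫⁻ x in Ioi (0:ℝ), (ENNReal.ofReal (1/4) ^ r * D ^ r) * I1 x :=
          lintegral_mono step2
      _ = (ENNReal.ofReal (1/4) ^ r * D ^ r) * ∫⁻ x in Ioi (0:ℝ), I1 x :=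
          lintegral_const_mul' _ _ (ENNReal.mul_ne_top
            (ENNReal.rpow_ne_top_of_nonneg hr0.le ENNReal.ofReal_ne_top)
            (ENNReal.rpow_ne_top_of_nonneg hr0.le hDne))
      _ ≤ _ := mul_le_mul_right hI1bound _
  refine (ENNReal.rpow_le_rpow step3 he1.le).trans (le_of_eq ?_)
  -- now a pure computation with rpow
  have hr1 : r * e1 = 1 := by rw [he1def]; field_simp
  have hsplit : (((ENNReal.ofReal (1/4) ^ r * D ^ r) * (8 * (A * B)))) ^ e1
      = ENNReal.ofReal (1/4) * D * ((8:ℝ≥0∞) ^ e1 * (A ^ e1 * B ^ e1)) := by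
    rw [ENNReal.mul_rpow_of_nonneg _ _ he1.le, ENNReal.mul_rpow_of_nonneg _ _ he1.le,
      ENNReal.mul_rpow_of_nonneg _ _ he1.le, ENNReal.mul_rpow_of_nonneg _ _ he1.le,
      ← ENNReal.rpow_mul, ← ENNReal.rpow_mul, hr1, ENNReal.rpow_one, ENNReal.rpow_one]
  rw [hsplit, hDdef, ENNReal.mul_rpow_of_nonneg _ _ he2.le,
    ENNReal.mul_rpow_of_nonneg _ _ he3.le]
  -- convert numerals to powers of two
  have h4 : (4:ℝ≥0∞) = 2 ^ (2:ℝ) := by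
    rw [show (2:ℝ) = ((2:ℕ):ℝ) by norm_num, ENNReal.rpow_natCast]; norm_num
  have h8 : (8:ℝ≥0∞) = 2 ^ (3:ℝ) := by
    rw [show (3:ℝ) = ((3:ℕ):ℝ) by norm_num, ENNReal.rpow_natCast]; norm_num
  have hc4 : ENNReal.ofReal (1/4) = (2:ℝ≥0∞) ^ (-2:ℝ) := by
    rw [show (1/4 : ℝ) = ((4:ℝ))⁻¹ by norm_num, ENNReal.ofReal_inv_of_pos (by norm_num),
      ENNReal.rpow_neg, show ENNReal.ofReal 4 = (4:ℝ≥0∞) by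
        rw [show (4:ℝ) = ((4:ℕ):ℝ) by norm_num, ENNReal.ofReal_natCast]; norm_num,
      h4]
  rw [hc4, h4, h8, ← ENNReal.rpow_mul, ← ENNReal.rpow_mul, ← ENNReal.rpow_mul]
  have hA' : A ^ e2 * A ^ e1 = A ^ (1/p) := by
    rw [← ENNReal.rpow_add_of_nonneg _ _ he2.le he1.le, hep]
  have hB' : B ^ e3 * B ^ e1 = B ^ (1/q) := by
    rw [← ENNReal.rpow_add_of_nonneg _ _ he3.le he1.le, heq]
  have hconst : (2:ℝ≥0∞) ^ (-2:ℝ) * 2 ^ (2 * e2) * 2 ^ (3 * e3) * 2 ^ (3 * e1)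
      = 2 ^ (1/q) := by
    rw [← ENNReal.rpow_add _ _ two_ne_zero ENNReal.ofNat_ne_top,
      ← ENNReal.rpow_add _ _ two_ne_zero ENNReal.ofNat_ne_top,
      ← ENNReal.rpow_add _ _ two_ne_zero ENNReal.ofNat_ne_top]
    congr 1
    rw [he1def, he2def, he3def]; linarith
  calc (2:ℝ≥0∞) ^ (-2:ℝ) * (2 ^ (2 * e2) * A ^ e2 * (2 ^ (3 * e3) * B ^ e3))
        * (2 ^ (3 * e1) * (A ^ e1 * B ^ e1))
      = ((2:ℝ≥0∞) ^ (-2:ℝ) * 2 ^ (2 * e2) * 2 ^ (3 * e3) * 2 ^ (3 * e1))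
        * (A ^ e2 * A ^ e1) * (B ^ e3 * B ^ e1) := by ring
    _ = (2:ℝ≥0∞) ^ (1/q) * A ^ (1/p) * B ^ (1/q) := by rw [hconst, hA', hB']


lemma sm_gconv (f g : ℝ → ℝ) (hf : Measurable f) (hg : Measurable g) :
    StronglyMeasurable (gconv f g) := by
  have h1 : StronglyMeasurable fun w : (ℝ × ℝ) × ℝ =>
      phiKer w.1.1 w.2 w.1.2 * f w.2 * g w.1.2 := by
    apply Measurable.stronglyMeasurable; fun_prop
  have h2 := h1.integral_prod_right' (ν := volume.restrict (Ioi 0))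
  have h3 := h2.integral_prod_right' (ν := volume.restrict (Ioi 0))
  exact h3.const_mul (1/4 : ℝ)

end GYoung

theorem gconv_young_inequality (p q r β : ℝ) (hp : 1 < p) (hq : 1 < q) (hr : 1 < r)
    (hpqr : 1 / p + 1 / q = 1 + 1 / r) (hβ : β ∈ Set.Ioc (0 : ℝ) 1)
    (f g : ℝ → ℝ)
    (hf : MeasureTheory.MemLp f (ENNReal.ofReal p)
      (MeasureTheory.volume.restrict (Set.Ioi 0)))
    (hg : Measurable g)
    (hgK : MeasureTheory.IntegrableOn (fun v => |g v| ^ q * K0 (β * v)) (Set.Ioi 0)) :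
    MeasureTheory.MemLp (gconv f g) (ENNReal.ofReal r)
      (MeasureTheory.volume.restrict (Set.Ioi 0)) ∧
    (∫ x in Set.Ioi (0 : ℝ), |gconv f g x| ^ r) ^ (1 / r) ≤
      2 ^ (1 / q) * (∫ x in Set.Ioi (0 : ℝ), |f x| ^ p) ^ (1 / p) *
        (∫ v in Set.Ioi (0 : ℝ), |g v| ^ q * K0 (β * v)) ^ (1 / q) := by
  have hp0 : (0:ℝ) < p := by linarith
  have hq0 : (0:ℝ) < q := by linarith
  have hr0 : (0:ℝ) < r := by linarith
  obtain ⟨f₀, hf₀m, hff⟩ : ∃ f₀ : ℝ → ℝ, Measurable f₀ ∧ f =ᵐ[volume.restrict (Ioi 0)] f₀ :=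
    ⟨hf.aestronglyMeasurable.mk f, hf.aestronglyMeasurable.stronglyMeasurable_mk.measurable,
      hf.aestronglyMeasurable.ae_eq_mk⟩
  have hgc : gconv f g = gconv f₀ g := by
    funext x
    show (1/4 : ℝ) * ∫ v in Ioi (0:ℝ), (∫ u in Ioi (0:ℝ), phiKer x u v * f u * g v)
      = (1/4 : ℝ) * ∫ v in Ioi (0:ℝ), (∫ u in Ioi (0:ℝ), phiKer x u v * f₀ u * g v)
    congr 1
    refine integral_congr_ae (Filter.Eventually.of_forall fun v => ?_)
    exact integral_congr_ae (hff.mono fun u hu => by simp only [hu])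
  -- integrability of |f| ^ p
  have hofp : ENNReal.ofReal p ≠ 0 := by
    simp only [ne_eq, ENNReal.ofReal_eq_zero, not_le]; linarith
  have hfp_int : Integrable (fun x => |f x| ^ p) (volume.restrict (Ioi 0)) := by
    have h := hf.integrable_norm_rpow hofp ENNReal.ofReal_ne_top
    simpa [ENNReal.toReal_ofReal hp0.le, Real.norm_eq_abs] using h
  have hfp_nonneg : 0 ≤ ∫ x in Ioi (0:ℝ), |f x| ^ p :=
    setIntegral_nonneg measurableSet_Ioi fun x _ => by positivity
  have hg_nonneg : ∀ v : ℝ, 0 ≤ |g v| ^ q * K0 (β * v) := fun v =>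
    mul_nonneg (by positivity) (GYoung.K0_nonneg _)
  have hgq_nonneg : 0 ≤ ∫ v in Ioi (0:ℝ), |g v| ^ q * K0 (β * v) :=
    setIntegral_nonneg measurableSet_Ioi fun v _ => hg_nonneg v
  -- identification of the two norms as lintegrals
  have hAeq : (∫⁻ u in Ioi (0:ℝ), (‖f₀ u‖₊ : ℝ≥0∞) ^ p)
      = ENNReal.ofReal (∫ x in Ioi (0:ℝ), |f x| ^ p) := by
    rw [ofReal_integral_eq_lintegral_ofReal hfp_int (ae_of_all _ fun x => by positivity)]
    refine lintegral_congr_ae ?_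
    filter_upwards [hff] with x hx
    rw [← hx, ← enorm_eq_nnnorm, Real.enorm_eq_ofReal_abs,
      ← ENNReal.ofReal_rpow_of_nonneg (abs_nonneg _) hp0.le]
  have hBeq : (∫⁻ v in Ioi (0:ℝ), (‖g v‖₊ : ℝ≥0∞) ^ q * ENNReal.ofReal (K0 (β * v)))
      = ENNReal.ofReal (∫ v in Ioi (0:ℝ), |g v| ^ q * K0 (β * v)) := by
    rw [ofReal_integral_eq_lintegral_ofReal hgK (ae_of_all _ hg_nonneg)]
    refine lintegral_congr fun v => ?_
    rw [ENNReal.ofReal_mul (by positivity), ← enorm_eq_nnnorm, Real.enorm_eq_ofReal_abs,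
      ← ENNReal.ofReal_rpow_of_nonneg (abs_nonneg _) hq0.le]
  have key := GYoung.main p q r β hp hq hr hpqr hβ f₀ g hf₀m hg
    (ENNReal.ofReal (∫ x in Ioi (0:ℝ), |f x| ^ p))
    (ENNReal.ofReal (∫ v in Ioi (0:ℝ), |g v| ^ q * K0 (β * v)))
    hAeq.symm hBeq.symm ENNReal.ofReal_ne_top ENNReal.ofReal_ne_top
  have hRne : (2:ℝ≥0∞) ^ (1/q) * ENNReal.ofReal (∫ x in Ioi (0:ℝ), |f x| ^ p) ^ (1/p)
      * ENNReal.ofReal (∫ v in Ioi (0:ℝ), |g v| ^ q * K0 (β * v)) ^ (1/q) ≠ ⊤ :=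
    ENNReal.mul_ne_top (ENNReal.mul_ne_top
      (ENNReal.rpow_ne_top_of_nonneg (by positivity) ENNReal.ofNat_ne_top)
      (ENNReal.rpow_ne_top_of_nonneg (by positivity) ENNReal.ofReal_ne_top))
      (ENNReal.rpow_ne_top_of_nonneg (by positivity) ENNReal.ofReal_ne_top)
  have hrne0 : ENNReal.ofReal r ≠ 0 := by
    simp only [ne_eq, ENNReal.ofReal_eq_zero, not_le]; linarith
  constructor
  · rw [hgc]
    refine ⟨(GYoung.sm_gconv f₀ g hf₀m hg).aestronglyMeasurable, ?_⟩
    rw [eLpNorm_eq_lintegral_rpow_enorm_toReal hrne0 ENNReal.ofReal_ne_top,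
      ENNReal.toReal_ofReal hr0.le]
    exact lt_of_le_of_lt key (lt_top_iff_ne_top.2 hRne)
  · have hm : Measurable (gconv f g) := by
      rw [hgc]; exact (GYoung.sm_gconv f₀ g hf₀m hg).measurable
    have key' : (∫⁻ x in Ioi (0:ℝ), (‖gconv f g x‖₊ : ℝ≥0∞) ^ r) ^ (1/r) ≤
        (2:ℝ≥0∞) ^ (1/q) * ENNReal.ofReal (∫ x in Ioi (0:ℝ), |f x| ^ p) ^ (1/p)
        * ENNReal.ofReal (∫ v in Ioi (0:ℝ), |g v| ^ q * K0 (β * v)) ^ (1/q) := by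
      rw [hgc]; exact key
    have hLeq : (∫ x in Ioi (0:ℝ), |gconv f g x| ^ r)
        = (∫⁻ x in Ioi (0:ℝ), (‖gconv f g x‖₊ : ℝ≥0∞) ^ r).toReal := by
      rw [integral_eq_lintegral_of_nonneg_ae (ae_of_all _ fun x => by positivity)
        (by exact (hm.abs.pow_const r).aestronglyMeasurable)]
      congr 1
      refine lintegral_congr fun x => ?_
      rw [← enorm_eq_nnnorm, Real.enorm_eq_ofReal_abs, ← ENNReal.ofReal_rpow_of_nonneg (abs_nonneg _) hr0.le]
    rw [hLeq, ENNReal.toReal_rpow]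
    calc ((∫⁻ x in Ioi (0:ℝ), (‖gconv f g x‖₊ : ℝ≥0∞) ^ r) ^ (1/r)).toReal
        ≤ ((2:ℝ≥0∞) ^ (1/q) * ENNReal.ofReal (∫ x in Ioi (0:ℝ), |f x| ^ p) ^ (1/p)
          * ENNReal.ofReal (∫ v in Ioi (0:ℝ), |g v| ^ q * K0 (β * v)) ^ (1/q)).toReal :=
          ENNReal.toReal_mono hRne key'
      _ = 2 ^ (1/q) * (∫ x in Ioi (0:ℝ), |f x| ^ p) ^ (1/p)
          * (∫ v in Ioi (0:ℝ), |g v| ^ q * K0 (β * v)) ^ (1/q) := by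
          rw [ENNReal.toReal_mul, ENNReal.toReal_mul, ← ENNReal.toReal_rpow,
            ← ENNReal.toReal_rpow, ← ENNReal.toReal_rpow,
            ENNReal.toReal_ofReal hfp_nonneg, ENNReal.toReal_ofReal hgq_nonneg]
          norm_num
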